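/- Let N ≥ 1 and let A be an N×N real symmetric matrix with nonnegative entries, and let λ > 0 and α > 0. Suppose ρ ∈ ℝ^N is a nonzero vector with 0 ≤ ρ_i ≤ 1 for all i satisfying the endemic steady-state equations ρ_i = λα(Aρ)_i / (1 + λα(Aρ)_i) for every i. Then λ·α·μ_max(A) ≥ 1, where μ_max(A) is the largest eigenvalue of A; consequently λ·α·ρ(A) ≥ 1, where ρ(A) = max over eigenvalues μ of A of |μ| is the spectral radius of A. In other words, if an epidemic becomes endemic then necessarily λ ≥ 1/(α ρ(A)). -/

import Mathlib

open Matrix Finset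

/-- Core of Theorem 1: if a nonzero endemic steady state exists for the SIS comparison
system, then `λ·α·μ_max(A) ≥ 1`, hence `λ·α·ρ(A) ≥ 1`. -/
theorem endemic_implies_threshold
    (N : ℕ) (hN : 1 ≤ N) (A : Matrix (Fin N) (Fin N) ℝ)
    (hA : A.IsHermitian) (hApos : ∀ i j, 0 ≤ A i j)
    (lam alp : ℝ) (hlam : 0 < lam) (halp : 0 < alp)
    (ρ : Fin N → ℝ) (hρne : ρ ≠ 0) (hρ : ∀ i, 0 ≤ ρ i ∧ ρ i ≤ 1)
    (heq : ∀ i, ρ i = lam * alp * A.mulVec ρ i / (1 + lam * alp * A.mulVec ρ i)) :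
    1 ≤ lam * alp *
      Finset.univ.sup' (Finset.univ_nonempty_iff.mpr ⟨⟨0, hN⟩⟩) hA.eigenvalues ∧
    1 ≤ lam * alp *
      Finset.univ.sup' (Finset.univ_nonempty_iff.mpr ⟨⟨0, hN⟩⟩)
        (fun i => |hA.eigenvalues i|) := by
  classical
  have hne : (Finset.univ : Finset (Fin N)).Nonempty := Finset.univ_nonempty_iff.mpr ⟨⟨0, hN⟩⟩
  set c := lam * alp with hc
  have hcpos : 0 < c := mul_pos hlam halp
  have hAρ : ∀ i, 0 ≤ A.mulVec ρ i := by
    intro i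
    simp only [Matrix.mulVec, dotProduct]
    exact Finset.sum_nonneg fun j _ => mul_nonneg (hApos i j) (hρ j).1
  have h1 : ∀ i, ρ i ≤ c * A.mulVec ρ i := by
    intro i
    have ht : 0 ≤ c * A.mulVec ρ i := mul_nonneg hcpos.le (hAρ i)
    have h1t : 0 < 1 + c * A.mulVec ρ i := by linarith
    rw [heq i, div_le_iff₀ h1t]
    nlinarith
  have hS : 0 < ∑ i, ρ i * ρ i := by
    obtain ⟨i, hi⟩ : ∃ i, ρ i ≠ 0 := Function.ne_iff.mp hρne
    have hploc : 0 < ρ i := (hρ i).1.lt_of_ne' hi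
    have hposi : 0 < ρ i * ρ i := mul_pos hploc hploc
    have : ∑ j, ρ j * ρ j ≥ ρ i * ρ i :=
      Finset.single_le_sum (fun j _ => mul_self_nonneg (ρ j)) (Finset.mem_univ i)
    linarith
  have h2 : ∑ i, ρ i * ρ i ≤ c * ∑ i, ρ i * A.mulVec ρ i := by
    rw [Finset.mul_sum]
    apply Finset.sum_le_sum
    intro i _
    have := h1 i
    nlinarith [(hρ i).1]
  -- Rayleigh quotient bound
  set M := Finset.univ.sup' hne hA.eigenvalues with hM
  let x : EuclideanSpace ℝ (Fin N) := WithLp.toLp 2 ρ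
  let b := hA.eigenvectorBasis
  have hrepr : ∀ (y : EuclideanSpace ℝ (Fin N)) i, b.repr y i = ∑ k, b i k * y k := by
    intro y i
    rw [b.repr_apply_apply]
    simp [EuclideanSpace.inner_eq_star_dotProduct]
    rw [dotProduct]
    exact Finset.sum_congr rfl fun k _ => mul_comm _ _
  have hAsym : Aᵀ = A := by
    have := hA.eq
    simpa [Matrix.conjTranspose_eq_transpose_of_trivial] using this
  have hAx : ∀ i, b.repr (WithLp.toLp 2 (A.mulVec ρ) : EuclideanSpace ℝ (Fin N)) i
      = hA.eigenvalues i * b.repr x i := by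
    intro i
    rw [hrepr, hrepr]
    have h1 : ∑ k, b i k * (WithLp.toLp 2 (A.mulVec ρ) : EuclideanSpace ℝ (Fin N)) k = (b i).ofLp ⬝ᵥ (A *ᵥ ρ) := rfl
    rw [h1, Matrix.dotProduct_mulVec, ← Matrix.mulVec_transpose, hAsym,
      hA.mulVec_eigenvectorBasis]
    simp [x, dotProduct, Finset.mul_sum, mul_assoc]
    rfl
  have hinner : ∀ (y z : EuclideanSpace ℝ (Fin N)),
      ∑ i, y i * z i = ∑ i, b.repr y i * b.repr z i := by
    intro y z
    have := b.repr.inner_map_map z y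
    simp only [PiLp.inner_apply, RCLike.inner_apply, starRingEnd_apply, star_trivial] at this
    exact this.symm
  have hRayleigh : ∑ i, ρ i * A.mulVec ρ i ≤ M * ∑ i, ρ i * ρ i := by
    have e1 : ∑ i, ρ i * A.mulVec ρ i
        = ∑ i, b.repr x i * b.repr (WithLp.toLp 2 (A.mulVec ρ) : EuclideanSpace ℝ (Fin N)) i :=
      hinner x (WithLp.toLp 2 (A.mulVec ρ) : EuclideanSpace ℝ (Fin N))
    have e2 : ∑ i, ρ i * ρ i = ∑ i, b.repr x i * b.repr x i := hinner x x
    rw [e1, e2, Finset.mul_sum]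
    apply Finset.sum_le_sum
    intro i _
    rw [hAx i]
    have hle : hA.eigenvalues i ≤ M := Finset.le_sup' _ (Finset.mem_univ i)
    nlinarith [mul_self_nonneg (b.repr x i)]
  have hfirst : 1 ≤ c * M := by
    have h3 : ∑ i, ρ i * ρ i ≤ c * (M * ∑ i, ρ i * ρ i) := by
      calc ∑ i, ρ i * ρ i ≤ c * ∑ i, ρ i * A.mulVec ρ i := h2
        _ ≤ c * (M * ∑ i, ρ i * ρ i) := by
            exact mul_le_mul_of_nonneg_left hRayleigh hcpos.le
    nlinarith
  refine ⟨hfirst, ?_⟩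
  obtain ⟨i0, _, hi0⟩ := Finset.exists_mem_eq_sup' hne hA.eigenvalues
  have hMabs : M ≤ Finset.univ.sup' hne (fun i => |hA.eigenvalues i|) := by
    rw [hM, hi0]
    exact le_trans (le_abs_self _) (Finset.le_sup' (fun i => |hA.eigenvalues i|) (Finset.mem_univ i0))
  calc (1:ℝ) ≤ c * M := hfirst
    _ ≤ c * Finset.univ.sup' hne (fun i => |hA.eigenvalues i|) :=
        mul_le_mul_of_nonneg_left hMabs hcpos.le
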